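/- Let P = e_1…e_k be a path all of whose arc gains lie in [−B, B]. Let F_1 = e_a…e_b and F_2 = e_c…e_d be two distinct subpaths of P that are funnels, each maximal with respect to inclusion among funnel subpaths of P. If a < c, then c ≥ b − 1; moreover, if c = b − 1 then g(e_{b−1}) = −g(e_b). -/
import Mathlib


open Finset

namespace EV

noncomputable section

/-- Charge after traversing `i` arcs of a path with arc gains `g`, battery capacity `B`,
initial charge `b`. -/
def charge (B b : ℝ) (g : ℕ → ℝ) : ℕ → ℝ
  | 0 => b
  | i + 1 => min (charge B b g i + g i) B

/-- The traversal of the path with `n` arcs is feasible from initial charge `b`. -/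
def Feasible (B b : ℝ) (g : ℕ → ℝ) (n : ℕ) : Prop :=
  ∀ i < n, 0 ≤ charge B b g i + g i

open Classical in
/-- Maximum final charge `α_b(P)` for a path `P` with `n` arc gains `g`,
as an extended real (`⊥ = -∞` if the traversal is infeasible). -/
def alpha (B b : ℝ) (g : ℕ → ℝ) (n : ℕ) : EReal :=
  if Feasible B b g n then ((charge B b g n : ℝ) : EReal) else ⊥

/-- Gain of the `i`-th vertex (0-indexed): the sum of the first `i` arc gains. -/
def vGain (g : ℕ → ℝ) (i : ℕ) : ℝ := ∑ t ∈ Finset.range i, g t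

/-- `P` is traversable: `α_B(P) ≥ 0`, i.e. feasible from a full battery. -/
def Traversable (B : ℝ) (g : ℕ → ℝ) (n : ℕ) : Prop := Feasible B B g n

/-- `C` is a charge drop schedule for a path with `n` arcs (vertices `0,…,n`):
no drop at the first vertex, all drops nonnegative. -/
def Schedule (C : ℕ → ℝ) (n : ℕ) : Prop := C 0 = 0 ∧ ∀ i ≤ n, 0 ≤ C i

/-- Gain of vertex `i` with respect to the charge drop schedule `C`. -/
def cGain (g C : ℕ → ℝ) (i : ℕ) : ℝ := vGain g i - ∑ t ∈ Finset.range (i + 1), C t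

/-- `P` (with `n` arcs) is ascending with respect to the schedule `C`. -/
def AscendingC (B : ℝ) (g C : ℕ → ℝ) (n : ℕ) : Prop :=
  Traversable B g n ∧ ∀ i ≤ n, 0 ≤ cGain g C i ∧ cGain g C i ≤ cGain g C n

/-- `P` (with `n` arcs) is descending with respect to the schedule `C`. -/
def DescendingC (B : ℝ) (g C : ℕ → ℝ) (n : ℕ) : Prop :=
  Traversable B g n ∧ ∀ i ≤ n, cGain g C n ≤ cGain g C i ∧ cGain g C i ≤ 0

/-- `P` is monotone with respect to the schedule `C`. -/
def MonotoneC (B : ℝ) (g C : ℕ → ℝ) (n : ℕ) : Prop :=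
  AscendingC B g C n ∨ DescendingC B g C n

/-- Ascending with respect to the zero schedule. -/
def Ascending (B : ℝ) (g : ℕ → ℝ) (n : ℕ) : Prop := AscendingC B g (fun _ => 0) n

/-- Descending with respect to the zero schedule. -/
def Descending (B : ℝ) (g : ℕ → ℝ) (n : ℕ) : Prop := DescendingC B g (fun _ => 0) n

/-- Monotone with respect to the zero schedule. -/
def MonotonePath (B : ℝ) (g : ℕ → ℝ) (n : ℕ) : Prop := Ascending B g n ∨ Descending B g n

/-- The contiguous subpath whose arcs start at arc index `a`. -/
def SubPath (g : ℕ → ℝ) (a : ℕ) : ℕ → ℝ := fun t => g (a + t)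

/-- Restriction of a charge drop schedule to the subpath starting at vertex `a`:
no drop at the subpath's first vertex. -/
def restrict (C : ℕ → ℝ) (a : ℕ) : ℕ → ℝ := fun t => if t = 0 then 0 else C (a + t)

/-- First-arc-bounded with respect to a schedule `C` (no drop at the second vertex,
and all vertex gains lie between the gains of the first two vertices). -/
def FirstArcBoundedC (g C : ℕ → ℝ) (n : ℕ) : Prop :=
  C 1 = 0 ∧
    ((0 ≤ g 0 ∧ ∀ i ≤ n, 0 ≤ cGain g C i ∧ cGain g C i ≤ g 0) ∨
     (g 0 ≤ 0 ∧ ∀ i ≤ n, g 0 ≤ cGain g C i ∧ cGain g C i ≤ 0))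

/-- Last-arc-bounded with respect to a schedule `C` (no drops at the last two vertices,
and all vertex gains lie between the gains of the last two vertices). -/
def LastArcBoundedC (g C : ℕ → ℝ) (n : ℕ) : Prop :=
  C (n - 1) = 0 ∧ C n = 0 ∧
    ((0 ≤ g (n - 1) ∧ ∀ i ≤ n, cGain g C (n - 1) ≤ cGain g C i ∧ cGain g C i ≤ cGain g C n) ∨
     (g (n - 1) < 0 ∧ ∀ i ≤ n, cGain g C n ≤ cGain g C i ∧ cGain g C i ≤ cGain g C (n - 1)))

/-- First-arc-bounded (zero schedule). -/
def FirstArcBounded (g : ℕ → ℝ) (n : ℕ) : Prop := FirstArcBoundedC g (fun _ => 0) n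

/-- Last-arc-bounded (zero schedule). -/
def LastArcBounded (g : ℕ → ℝ) (n : ℕ) : Prop := LastArcBoundedC g (fun _ => 0) n

/-- Arc-bounded: first- or last-arc-bounded. -/
def ArcBounded (g : ℕ → ℝ) (n : ℕ) : Prop := FirstArcBounded g n ∨ LastArcBounded g n

/-- A funnel: arc-bounded and containing no monotone subpath of 2 or 3 consecutive arcs. -/
def Funnel (B : ℝ) (g : ℕ → ℝ) (n : ℕ) : Prop :=
  ArcBounded g n ∧ ∀ a m, (m = 2 ∨ m = 3) → a + m ≤ n → ¬ MonotonePath B (SubPath g a) m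

/-- `j = s̄(i)`: the maximal index `j ≥ i` (among arcs of a path with `n` arcs) such that
the subpath of arcs `i,…,j` is first-arc-bounded. -/
def IsSbar (g : ℕ → ℝ) (n i j : ℕ) : Prop :=
  i ≤ j ∧ j < n ∧ FirstArcBounded (SubPath g i) (j - i + 1) ∧
    ∀ j', i ≤ j' → j' < n → FirstArcBounded (SubPath g i) (j' - i + 1) → j' ≤ j

/-- `j = s̲(i)`: the minimal index `j ≤ i` such that the subpath of arcs `j,…,i`
is last-arc-bounded. -/
def IsSlow (g : ℕ → ℝ) (n i j : ℕ) : Prop :=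
  j ≤ i ∧ i < n ∧ LastArcBounded (SubPath g j) (i - j + 1) ∧
    ∀ j', j' ≤ i → LastArcBounded (SubPath g j') (i - j' + 1) → j ≤ j'

/-- Arc gains of the walk around a cycle with `m` arc gains `g`, starting at vertex `a`. -/
def cyc (g : ℕ → ℝ) (m a : ℕ) : ℕ → ℝ := fun t => g ((a + t) % m)

/-- A walk of length `ℓ` from `x` to `y` in the directed graph with arc relation `A`. -/
def IsWalk {V : Type*} (A : V → V → Prop) (w : ℕ → V) (ℓ : ℕ) (x y : V) : Prop :=
  w 0 = x ∧ w ℓ = y ∧ ∀ t < ℓ, A (w t) (w (t + 1))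

/-- The sequence of arc gains induced by a walk `w` in a graph with gain function `g`. -/
def walkGains {V : Type*} (g : V → V → ℝ) (w : ℕ → V) : ℕ → ℝ :=
  fun t => g (w t) (w (t + 1))

lemma charge_zero (B b : ℝ) (g : ℕ → ℝ) : charge B b g 0 = b := rfl

lemma charge_succ (B b : ℝ) (g : ℕ → ℝ) (i : ℕ) :
    charge B b g (i + 1) = min (charge B b g i + g i) B := rfl

lemma vGain_succ (g : ℕ → ℝ) (p : ℕ) : vGain g (p + 1) = vGain g p + g p := by
  simp [vGain, Finset.sum_range_succ]

lemma cGain_zs (g : ℕ → ℝ) (i : ℕ) : cGain g (fun _ => 0) i = vGain g i := by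
  simp [cGain]

lemma subPath_subPath (g : ℕ → ℝ) (l t : ℕ) : SubPath (SubPath g l) t = SubPath g (l + t) := by
  funext s; simp [SubPath, Nat.add_assoc]

lemma vGain_sub (g : ℕ → ℝ) (l i : ℕ) :
    vGain (SubPath g l) i = vGain g (l + i) - vGain g l := by
  induction i with
  | zero => simp [vGain]
  | succ i ih =>
      rw [vGain_succ, ih, ← Nat.add_assoc, vGain_succ]
      simp only [SubPath]
      ring

lemma mono2_nonneg (B : ℝ) (hB : 0 < B) (g' : ℕ → ℝ) (h0 : 0 ≤ g' 0) (h1 : 0 ≤ g' 1) :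
    MonotonePath B g' 2 := by
  have hc1 : charge B B g' 1 = B := by
    rw [charge_succ, charge_zero, min_eq_right (by linarith)]
  refine Or.inl ⟨?_, ?_⟩
  · intro i hi
    interval_cases i
    · rw [charge_zero]; linarith
    · rw [hc1]; linarith
  · intro i hi
    interval_cases i <;>
        simp only [cGain_zs, vGain, Finset.sum_range_succ, Finset.sum_range_zero, zero_add] <;>
      exact ⟨by linarith, by linarith⟩

lemma mono2_nonpos (B : ℝ) (hB : 0 < B) (g' : ℕ → ℝ) (h0 : g' 0 ≤ 0) (h1 : g' 1 ≤ 0)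
    (h0B : -B ≤ g' 0) (hsum : -B ≤ g' 0 + g' 1) :
    MonotonePath B g' 2 := by
  have hc1 : charge B B g' 1 = B + g' 0 := by
    rw [charge_succ, charge_zero, min_eq_left (by linarith)]
  refine Or.inr ⟨?_, ?_⟩
  · intro i hi
    interval_cases i
    · rw [charge_zero]; linarith
    · rw [hc1]; linarith
  · intro i hi
    interval_cases i <;>
        simp only [cGain_zs, vGain, Finset.sum_range_succ, Finset.sum_range_zero, zero_add] <;>
      exact ⟨by linarith, by linarith⟩

lemma mono3_asc (B : ℝ) (hB : 0 < B) (g' : ℕ → ℝ) (h0 : 0 ≤ g' 0) (h1 : g' 1 ≤ 0)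
    (h1B : -B ≤ g' 1) (h01 : 0 ≤ g' 0 + g' 1) (h12 : 0 ≤ g' 1 + g' 2) :
    MonotonePath B g' 3 := by
  have hc1 : charge B B g' 1 = B := by
    rw [charge_succ, charge_zero, min_eq_right (by linarith)]
  have hc2 : charge B B g' 2 = B + g' 1 := by
    rw [charge_succ, hc1, min_eq_left (by linarith)]
  refine Or.inl ⟨?_, ?_⟩
  · intro i hi
    interval_cases i
    · rw [charge_zero]; linarith
    · rw [hc1]; linarith
    · rw [hc2]; linarith
  · intro i hi
    interval_cases i <;>
        simp only [cGain_zs, vGain, Finset.sum_range_succ, Finset.sum_range_zero, zero_add] <;>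
      exact ⟨by linarith, by linarith⟩

lemma mono3_desc (B : ℝ) (hB : 0 < B) (g' : ℕ → ℝ) (h0 : g' 0 ≤ 0) (h1 : 0 ≤ g' 1)
    (h2 : g' 2 ≤ 0) (h01 : g' 0 + g' 1 ≤ 0) (h12 : g' 1 + g' 2 ≤ 0)
    (h0B : -B ≤ g' 0) (h01B : -B ≤ g' 0 + g' 1) (hTB : -B ≤ g' 0 + g' 1 + g' 2) :
    MonotonePath B g' 3 := by
  have hc1 : charge B B g' 1 = B + g' 0 := by
    rw [charge_succ, charge_zero, min_eq_left (by linarith)]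
  have hc2 : charge B B g' 2 = B + g' 0 + g' 1 := by
    rw [charge_succ, hc1, min_eq_left (by linarith)]
  refine Or.inr ⟨?_, ?_⟩
  · intro i hi
    interval_cases i
    · rw [charge_zero]; linarith
    · rw [hc1]; linarith
    · rw [hc2]; linarith
  · intro i hi
    interval_cases i <;>
        simp only [cGain_zs, vGain, Finset.sum_range_succ, Finset.sum_range_zero, zero_add] <;>
      exact ⟨by linarith, by linarith⟩
lemma cG_sub (g : ℕ → ℝ) (l i : ℕ) :
    cGain (SubPath g l) (fun _ => 0) i = vGain g (l + i) - vGain g l := by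
  rw [cGain_zs, vGain_sub]

lemma funnel_mono_global (B : ℝ) (g : ℕ → ℝ) (l len : ℕ)
    (hF : Funnel B (SubPath g l) len) :
    ∀ j m, (m = 2 ∨ m = 3) → l ≤ j → j + m ≤ l + len → ¬ MonotonePath B (SubPath g j) m := by
  intro j m hm hlj hjm
  have h := hF.2 (j - l) m hm (by omega)
  rwa [subPath_subPath, Nat.add_sub_cancel' hlj] at h

lemma funnel_of (B : ℝ) (g : ℕ → ℝ) (l len : ℕ)
    (hAB : ArcBounded (SubPath g l) len)
    (hno : ∀ j m, (m = 2 ∨ m = 3) → l ≤ j → j + m ≤ l + len →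
      ¬ MonotonePath B (SubPath g j) m) :
    Funnel B (SubPath g l) len := by
  refine ⟨hAB, ?_⟩
  intro a0 m hm ha0
  rw [subPath_subPath]
  exact hno (l + a0) m hm (by omega) (by omega)

lemma arcBounded_window (B : ℝ) (g : ℕ → ℝ) (n l len : ℕ)
    (hrange : ∀ i < n, |g i| ≤ B) (hn : l + len ≤ n) (hlen : 1 ≤ len)
    (hAB : ArcBounded (SubPath g l) len) :
    ∃ lo hi : ℝ, hi - lo ≤ B ∧ ∀ i ≤ len,
      lo ≤ vGain g (l + i) - vGain g l ∧ vGain g (l + i) - vGain g l ≤ hi := by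
  have hgl : |g l| ≤ B := hrange l (by omega)
  have h0 : SubPath g l 0 = g l := by simp [SubPath]
  rcases hAB with ⟨-, hd⟩ | ⟨-, -, hd⟩
  · rcases hd with ⟨hs, hall⟩ | ⟨hs, hall⟩
    · refine ⟨0, g l, by linarith [(abs_le.mp hgl).2], ?_⟩
      intro i hi
      have := hall i hi
      rwa [cG_sub, h0] at this
    · refine ⟨g l, 0, by linarith [(abs_le.mp hgl).1], ?_⟩
      intro i hi
      have := hall i hi
      rwa [cG_sub, h0] at this
  · obtain ⟨m, hm⟩ : ∃ m, len = m + 1 := ⟨len - 1, by omega⟩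
    have elen : len - 1 = m := by omega
    have hgm : |g (l + m)| ≤ B := hrange (l + m) (by omega)
    have c1 : cGain (SubPath g l) (fun _ => 0) (len - 1) = vGain g (l + m) - vGain g l := by
      rw [elen, cG_sub]
    have c2 : cGain (SubPath g l) (fun _ => 0) len = vGain g (l + m + 1) - vGain g l := by
      rw [cG_sub, show l + len = l + m + 1 by omega]
    have ev : vGain g (l + m + 1) = vGain g (l + m) + g (l + m) := vGain_succ g (l + m)
    rcases hd with ⟨hs, hall⟩ | ⟨hs, hall⟩
    · refine ⟨vGain g (l + m) - vGain g l, vGain g (l + m + 1) - vGain g l,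
        by rw [ev]; linarith [(abs_le.mp hgm).2], ?_⟩
      intro i hi
      have := hall i hi
      rwa [c1, c2, cG_sub] at this
    · refine ⟨vGain g (l + m + 1) - vGain g l, vGain g (l + m) - vGain g l,
        by rw [ev]; linarith [(abs_le.mp hgm).1], ?_⟩
      intro i hi
      have := hall i hi
      rwa [c1, c2, cG_sub] at this

lemma funnel_bound (B : ℝ) (g : ℕ → ℝ) (n l len : ℕ)
    (hrange : ∀ i < n, |g i| ≤ B) (hn : l + len ≤ n) (hlen : 1 ≤ len)
    (hAB : ArcBounded (SubPath g l) len) :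
    ∀ p q, l ≤ p → p ≤ l + len → l ≤ q → q ≤ l + len →
      vGain g p - vGain g q ≤ B := by
  obtain ⟨lo, hi, hw, hall⟩ := arcBounded_window B g n l len hrange hn hlen hAB
  intro p q hlp hpl hlq hql
  have hp := hall (p - l) (by omega)
  have hq := hall (q - l) (by omega)
  rw [show l + (p - l) = p by omega] at hp
  rw [show l + (q - l) = q by omega] at hq
  linarith [hp.1, hp.2, hq.1, hq.2]

lemma vGain_two (g : ℕ → ℝ) (j : ℕ) :
    vGain g (j + 2) = vGain g j + g j + g (j + 1) := by
  rw [show j + 2 = (j + 1) + 1 from rfl, vGain_succ, vGain_succ]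

lemma vGain_three (g : ℕ → ℝ) (j : ℕ) :
    vGain g (j + 3) = vGain g j + g j + g (j + 1) + g (j + 2) := by
  rw [show j + 3 = (j + 2) + 1 from rfl, vGain_succ, vGain_two]

lemma funnel_alt (B : ℝ) (hB : 0 < B) (g : ℕ → ℝ) (n l len : ℕ)
    (hrange : ∀ i < n, |g i| ≤ B) (hn : l + len ≤ n)
    (hF : Funnel B (SubPath g l) len) :
    ∀ j, l ≤ j → j + 2 ≤ l + len →
      (0 < g j ∧ g (j + 1) < 0) ∨ (g j < 0 ∧ 0 < g (j + 1)) := by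
  intro j hlj hj2
  have hmono := funnel_mono_global B g l len hF j 2 (Or.inl rfl) hlj hj2
  have h0 : SubPath g j 0 = g j := by simp [SubPath]
  have h1 : SubPath g j 1 = g (j + 1) := by simp [SubPath]
  by_contra hcon
  apply hmono
  rcases le_or_gt (g j) 0 with hgj | hgj
  · rcases le_or_gt (g (j + 1)) 0 with hgj1 | hgj1
    · have hsum : vGain g j - vGain g (j + 2) ≤ B :=
        funnel_bound B g n l len hrange hn (by omega) hF.1 j (j + 2)
          hlj (by omega) (by omega) (by omega)
      rw [vGain_two] at hsum
      refine mono2_nonpos B hB _ (by rwa [h0]) (by rwa [h1]) ?_ ?_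
      · rw [h0]; linarith [(abs_le.mp (hrange j (by omega))).1]
      · rw [h0, h1]; linarith
    · rcases eq_or_lt_of_le hgj with he | hlt
      · exact mono2_nonneg B hB _ (by simp [h0, ← he]) (by rw [h1]; linarith)
      · exact absurd (Or.inr ⟨hlt, hgj1⟩) hcon
  · rcases le_or_gt 0 (g (j + 1)) with hgj1 | hgj1
    · exact mono2_nonneg B hB _ (by rw [h0]; linarith) (by rwa [h1])
    · exact absurd (Or.inl ⟨hgj, hgj1⟩) hcon

lemma funnel_triple (B : ℝ) (hB : 0 < B) (g : ℕ → ℝ) (n l len : ℕ)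
    (hrange : ∀ i < n, |g i| ≤ B) (hn : l + len ≤ n)
    (hF : Funnel B (SubPath g l) len) :
    ∀ j, l ≤ j → j + 3 ≤ l + len → |g (j + 1)| ≤ |g j| → |g (j + 2)| < |g (j + 1)| := by
  intro j hlj hj3 hstep
  by_contra hcon
  push_neg at hcon
  have halt1 := funnel_alt B hB g n l len hrange hn hF j hlj (by omega)
  have halt2 := funnel_alt B hB g n l len hrange hn hF (j + 1) (by omega) (by omega)
  have hmono := funnel_mono_global B g l len hF j 3 (Or.inr rfl) hlj hj3
  have h0 : SubPath g j 0 = g j := by simp [SubPath]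
  have h1 : SubPath g j 1 = g (j + 1) := by simp [SubPath]
  have h2 : SubPath g j 2 = g (j + 2) := by simp [SubPath]
  apply hmono
  rcases halt1 with ⟨hp0, hn1⟩ | ⟨hn0, hp1⟩
  · have hp2 : 0 < g (j + 2) := by
      rcases halt2 with ⟨h, _⟩ | ⟨_, h⟩
      · linarith
      · exact h
    rw [abs_of_neg hn1, abs_of_pos hp0] at hstep
    rw [abs_of_neg hn1, abs_of_pos hp2] at hcon
    refine mono3_asc B hB _ (by rw [h0]; linarith) (by rw [h1]; linarith) ?_ ?_ ?_
    · rw [h1]; linarith [(abs_le.mp (hrange (j + 1) (by omega))).1]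
    · rw [h0, h1]; linarith
    · rw [h1, h2]; linarith
  · have hn2 : g (j + 2) < 0 := by
      rcases halt2 with ⟨_, h⟩ | ⟨h, _⟩
      · exact h
      · linarith
    rw [abs_of_pos hp1, abs_of_neg hn0] at hstep
    rw [abs_of_pos hp1, abs_of_neg hn2] at hcon
    have hsum2 : vGain g j - vGain g (j + 2) ≤ B :=
      funnel_bound B g n l len hrange hn (by omega) hF.1 j (j + 2)
        hlj (by omega) (by omega) (by omega)
    have hsum3 : vGain g j - vGain g (j + 3) ≤ B :=
      funnel_bound B g n l len hrange hn (by omega) hF.1 j (j + 3)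
        hlj (by omega) (by omega) (by omega)
    rw [vGain_two] at hsum2
    rw [vGain_three] at hsum3
    refine mono3_desc B hB _ (by rw [h0]; linarith) (by rw [h1]; linarith)
      (by rw [h2]; linarith) ?_ ?_ ?_ ?_ ?_
    · rw [h0, h1]; linarith
    · rw [h1, h2]; linarith
    · rw [h0]; linarith [(abs_le.mp (hrange j (by omega))).1]
    · rw [h0, h1]; linarith
    · rw [h0, h1, h2]; linarith
lemma fab_steps (B : ℝ) (hB : 0 < B) (g : ℕ → ℝ) (n l len : ℕ)
    (hrange : ∀ i < n, |g i| ≤ B) (hn : l + len ≤ n)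
    (hF : Funnel B (SubPath g l) len) (hFAB : FirstArcBounded (SubPath g l) len) :
    ∀ j, l ≤ j → j + 2 ≤ l + len → |g (j + 1)| ≤ |g j| := by
  have base : 2 ≤ len → |g (l + 1)| ≤ |g l| := by
    intro h2
    have halt := funnel_alt B hB g n l len hrange hn hF l le_rfl (by omega)
    obtain ⟨-, hd⟩ := hFAB
    have hc2 : cGain (SubPath g l) (fun _ => 0) 2 = g l + g (l + 1) := by
      rw [cG_sub, vGain_two]; ring
    have h0 : SubPath g l 0 = g l := by simp [SubPath]
    rcases hd with ⟨hs, hall⟩ | ⟨hs, hall⟩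
    · have hb := (hall 2 h2).1
      rw [hc2] at hb
      rcases halt with ⟨hp, hn1⟩ | ⟨hn0, -⟩
      · rw [abs_of_neg hn1, abs_of_pos hp]; linarith
      · exfalso; rw [h0] at hs; linarith
    · have hb := (hall 2 h2).2
      rw [hc2] at hb
      rcases halt with ⟨hp, -⟩ | ⟨hn0, hp1⟩
      · exfalso; rw [h0] at hs; linarith
      · rw [abs_of_pos hp1, abs_of_neg hn0]; linarith
  intro j hlj
  induction j, hlj using Nat.le_induction with
  | base => intro h; exact base (by omega)
  | succ j hj ih =>
      intro h
      exact le_of_lt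
        (funnel_triple B hB g n l len hrange hn hF j hj (by omega) (ih (by omega)))

lemma lab_last (B : ℝ) (hB : 0 < B) (g : ℕ → ℝ) (n l len : ℕ)
    (hrange : ∀ i < n, |g i| ≤ B) (hn : l + len ≤ n)
    (hF : Funnel B (SubPath g l) len) (hLAB : LastArcBounded (SubPath g l) len) :
    ∀ p, l ≤ p → p + 2 = l + len → |g p| ≤ |g (p + 1)| := by
  intro p hlp hp2
  obtain ⟨m, hm⟩ : ∃ m, len = m + 2 := ⟨len - 2, by omega⟩
  have hpm : l + m = p := by omega
  obtain ⟨-, -, hd⟩ := hLAB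
  have elen : len - 1 = m + 1 := by omega
  have halt := funnel_alt B hB g n l len hrange hn hF p hlp (by omega)
  have es : SubPath g l (len - 1) = g (p + 1) := by
    rw [elen]; show g (l + (m + 1)) = _; rw [show l + (m + 1) = p + 1 by omega]
  have c0 : cGain (SubPath g l) (fun _ => 0) m = vGain g p - vGain g l := by
    rw [cG_sub, hpm]
  have c1 : cGain (SubPath g l) (fun _ => 0) (len - 1) = vGain g p + g p - vGain g l := by
    rw [elen, cG_sub, show l + (m + 1) = p + 1 by omega, vGain_succ]
  have c2 : cGain (SubPath g l) (fun _ => 0) len =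
      vGain g p + g p + g (p + 1) - vGain g l := by
    rw [cG_sub, show l + len = p + 2 by omega, vGain_two]
  rcases hd with ⟨hs, hall⟩ | ⟨hs, hall⟩
  · rw [es] at hs
    have hb := (hall m (by omega)).2
    rw [c0, c2] at hb
    rcases halt with ⟨-, hn1⟩ | ⟨hn0, hp1⟩
    · linarith
    · rw [abs_of_neg hn0, abs_of_pos hp1]; linarith
  · rw [es] at hs
    have hb := (hall m (by omega)).1
    rw [c0, c2] at hb
    rcases halt with ⟨hp0, -⟩ | ⟨-, hp1⟩
    · rw [abs_of_pos hp0, abs_of_neg hs]; linarith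
    · linarith
lemma lab_steps (B : ℝ) (hB : 0 < B) (g : ℕ → ℝ) (n l len : ℕ)
    (hrange : ∀ i < n, |g i| ≤ B) (hn : l + len ≤ n)
    (hF : Funnel B (SubPath g l) len) (hLAB : LastArcBounded (SubPath g l) len) :
    ∀ j, l ≤ j → j + 3 ≤ l + len → |g j| < |g (j + 1)| := by
  intro j hlj hj3
  by_contra hcon
  push_neg at hcon
  have prop : ∀ k, j + 1 ≤ k → k + 2 ≤ l + len → |g (k + 1)| < |g k| := by
    intro k hk
    induction k, hk using Nat.le_induction with
    | base => intro h; exact funnel_triple B hB g n l len hrange hn hF j hlj (by omega) hcon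
    | succ k hk ih =>
        intro h
        exact funnel_triple B hB g n l len hrange hn hF k (by omega) (by omega)
          (le_of_lt (ih (by omega)))
  have hlast := lab_last B hB g n l len hrange hn hF hLAB (l + len - 2) (by omega) (by omega)
  have hp := prop (l + len - 2) (by omega) (by omega)
  linarith
lemma build_fab (g : ℕ → ℝ) (l len : ℕ)
    (halt : ∀ j, l ≤ j → j + 2 ≤ l + len →
      (0 < g j ∧ g (j + 1) < 0) ∨ (g j < 0 ∧ 0 < g (j + 1)))
    (hsteps : ∀ j, l ≤ j → j + 2 ≤ l + len → |g (j + 1)| ≤ |g j|) :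
    FirstArcBounded (SubPath g l) len := by
  set lo := min (vGain g l) (vGain g (l + 1)) with hlo
  set hi := max (vGain g l) (vGain g (l + 1)) with hhi
  have inv : ∀ i ≤ len, lo ≤ vGain g (l + i) ∧ vGain g (l + i) ≤ hi := by
    intro i
    induction i using Nat.strong_induction_on with
    | _ i ih =>
      match i with
      | 0 => intro _; simpa using ⟨min_le_left _ _, le_max_left _ _⟩
      | 1 => intro _; exact ⟨min_le_right _ _, le_max_right _ _⟩
      | (k + 2) =>
        intro hk
        have h1 := ih k (by omega) (by omega)
        have h2 := ih (k + 1) (by omega) (by omega)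
        have ha := halt (l + k) (by omega) (by omega)
        have hs := hsteps (l + k) (by omega) (by omega)
        have e1 : vGain g (l + (k + 1)) = vGain g (l + k) + g (l + k) := by
          rw [show l + (k + 1) = (l + k) + 1 by omega, vGain_succ]
        have e2 : vGain g (l + (k + 2)) = vGain g (l + k) + g (l + k) + g (l + k + 1) := by
          rw [show l + (k + 2) = (l + k) + 2 by omega, vGain_two]
        rw [e1] at h2
        rcases ha with ⟨hp, hng⟩ | ⟨hng, hp⟩
        · rw [abs_of_neg hng, abs_of_pos hp] at hs
          exact ⟨by rw [e2]; linarith [h1.1], by rw [e2]; linarith [h2.2]⟩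
        · rw [abs_of_pos hp, abs_of_neg hng] at hs
          exact ⟨by rw [e2]; linarith [h2.1], by rw [e2]; linarith [h1.2]⟩
  have e1 : vGain g (l + 1) = vGain g l + g l := vGain_succ g l
  have h0 : SubPath g l 0 = g l := by simp [SubPath]
  refine ⟨rfl, ?_⟩
  rcases le_or_gt 0 (g l) with hgl | hgl
  · left
    refine ⟨by rw [h0]; exact hgl, ?_⟩
    intro i hi2
    have hb := inv i hi2
    have hlo' : lo = vGain g l := by rw [hlo, min_eq_left (by linarith)]
    have hhi' : hi = vGain g (l + 1) := by rw [hhi, max_eq_right (by linarith)]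
    rw [hlo'] at hb; rw [hhi', e1] at hb
    rw [cG_sub, h0]
    exact ⟨by linarith [hb.1], by linarith [hb.2]⟩
  · right
    refine ⟨by rw [h0]; linarith, ?_⟩
    intro i hi2
    have hb := inv i hi2
    have hlo' : lo = vGain g (l + 1) := by rw [hlo, min_eq_right (by linarith)]
    have hhi' : hi = vGain g l := by rw [hhi, max_eq_left (by linarith)]
    rw [hlo', e1] at hb; rw [hhi'] at hb
    rw [cG_sub, h0]
    exact ⟨by linarith [hb.1], by linarith [hb.2]⟩

lemma build_lab (g : ℕ → ℝ) (l len m : ℕ) (hm : len = m + 1)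
    (halt : ∀ j, l ≤ j → j + 2 ≤ l + len →
      (0 < g j ∧ g (j + 1) < 0) ∨ (g j < 0 ∧ 0 < g (j + 1)))
    (hsteps : ∀ j, l ≤ j → j + 2 ≤ l + len → |g j| ≤ |g (j + 1)|) :
    LastArcBounded (SubPath g l) len := by
  set lo := min (vGain g (l + m)) (vGain g (l + m + 1)) with hlo
  set hi := max (vGain g (l + m)) (vGain g (l + m + 1)) with hhi
  have inv : ∀ k i, i + k = len → lo ≤ vGain g (l + i) ∧ vGain g (l + i) ≤ hi := by
    intro k
    induction k using Nat.strong_induction_on with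
    | _ k ih =>
      match k with
      | 0 =>
        intro i hik
        rw [show l + i = l + m + 1 by omega]
        exact ⟨min_le_right _ _, le_max_right _ _⟩
      | 1 =>
        intro i hik
        rw [show l + i = l + m by omega]
        exact ⟨min_le_left _ _, le_max_left _ _⟩
      | (k + 2) =>
        intro i hik
        have h1 := ih 1 (by omega) (i + k + 1) (by omega)
        have h2 := ih 0 (by omega) (i + k + 2) (by omega)
        have h1' := ih (k + 1) (by omega) (i + 1) (by omega)
        have h2' := ih k (by omega) (i + 2) (by omega)
        have ha := halt (l + i) (by omega) (by omega)
        have hs := hsteps (l + i) (by omega) (by omega)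
        have e1 : vGain g (l + (i + 1)) = vGain g (l + i) + g (l + i) := by
          rw [show l + (i + 1) = (l + i) + 1 by omega, vGain_succ]
        have e2 : vGain g (l + (i + 2)) = vGain g (l + i) + g (l + i) + g (l + i + 1) := by
          rw [show l + (i + 2) = (l + i) + 2 by omega, vGain_two]
        rw [e1] at h1'; rw [e2] at h2'
        rcases ha with ⟨hp, hng⟩ | ⟨hng, hp⟩
        · rw [abs_of_neg hng, abs_of_pos hp] at hs
          exact ⟨by linarith [h2'.1], by linarith [h1'.2]⟩
        · rw [abs_of_pos hp, abs_of_neg hng] at hs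
          exact ⟨by linarith [h1'.1], by linarith [h2'.2]⟩
  have elen : len - 1 = m := by omega
  have es : SubPath g l (len - 1) = g (l + m) := by rw [elen]; rfl
  have ev : vGain g (l + m + 1) = vGain g (l + m) + g (l + m) := vGain_succ g (l + m)
  have c1 : ∀ i, cGain (SubPath g l) (fun _ => 0) i = vGain g (l + i) - vGain g l :=
    fun i => cG_sub g l i
  have cl1 : cGain (SubPath g l) (fun _ => 0) (len - 1) = vGain g (l + m) - vGain g l := by
    rw [elen, c1]
  have cl : cGain (SubPath g l) (fun _ => 0) len = vGain g (l + m + 1) - vGain g l := by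
    rw [c1, show l + len = l + m + 1 by omega]
  refine ⟨rfl, rfl, ?_⟩
  rcases le_or_gt 0 (g (l + m)) with hgp | hgp
  · left
    refine ⟨by rw [es]; exact hgp, ?_⟩
    intro i hi2
    have hb := inv (len - i) i (by omega)
    have hlo' : lo = vGain g (l + m) := by rw [hlo, min_eq_left (by rw [ev]; linarith)]
    have hhi' : hi = vGain g (l + m + 1) := by rw [hhi, max_eq_right (by rw [ev]; linarith)]
    rw [hlo'] at hb; rw [hhi'] at hb
    rw [cl1, cl, c1]
    exact ⟨by linarith [hb.1], by linarith [hb.2]⟩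
  · right
    refine ⟨by rw [es]; exact hgp, ?_⟩
    intro i hi2
    have hb := inv (len - i) i (by omega)
    have hlo' : lo = vGain g (l + m + 1) := by rw [hlo, min_eq_right (by rw [ev]; linarith)]
    have hhi' : hi = vGain g (l + m) := by rw [hhi, max_eq_left (by rw [ev]; linarith)]
    rw [hlo'] at hb; rw [hhi'] at hb
    rw [cl1, cl, c1]
    exact ⟨by linarith [hb.1], by linarith [hb.2]⟩

/-- Two distinct inclusion-maximal funnel subpaths `e_a…e_b` and `e_c…e_d`
of a path with gains in `[-B,B]` with `a < c` satisfy `c ≥ b - 1`, and if `c = b - 1`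
then `g(e_{b-1}) = -g(e_b)` (arc indices are 0-based). -/
theorem maximal_funnel_intersection (B : ℝ) (hB : 0 < B) (g : ℕ → ℝ) (n : ℕ)
    (hrange : ∀ i < n, |g i| ≤ B)
    (a b c d : ℕ) (hab : a ≤ b) (hbn : b < n) (hcd : c ≤ d) (hdn : d < n)
    (hF1 : Funnel B (SubPath g a) (b - a + 1))
    (hF2 : Funnel B (SubPath g c) (d - c + 1))
    (hmax1 : ∀ a' b', a' ≤ a → b ≤ b' → b' < n →
      Funnel B (SubPath g a') (b' - a' + 1) → a' = a ∧ b' = b)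
    (hmax2 : ∀ c' d', c' ≤ c → d ≤ d' → d' < n →
      Funnel B (SubPath g c') (d' - c' + 1) → c' = c ∧ d' = d)
    (hne : ¬(a = c ∧ b = d)) (hac : a < c) :
    b ≤ c + 1 ∧ (c + 1 = b → g c = -g b) := by
  have hbd : b < d := by
    by_contra hcon
    push_neg at hcon
    have := hmax2 a b hac.le hcon hbn hF1
    omega
  have hc1 : 1 ≤ c := by omega
  have key : ∀ _ : c + 1 ≤ b, c + 2 ≤ b ∨ g c ≠ -g b → False := by
    intro hcb hor
    have hn1 : a + (b - a + 1) ≤ n := by omega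
    have hn2 : c + (d - c + 1) ≤ n := by omega
    have halt1 := funnel_alt B hB g n a (b - a + 1) hrange hn1 hF1
    have halt2 := funnel_alt B hB g n c (d - c + 1) hrange hn2 hF2
    have hno1 := funnel_mono_global B g a (b - a + 1) hF1
    have hno2 := funnel_mono_global B g c (d - c + 1) hF2
    have haltU : ∀ j, a ≤ j → j + 2 ≤ d + 1 →
        (0 < g j ∧ g (j + 1) < 0) ∨ (g j < 0 ∧ 0 < g (j + 1)) := by
      intro j hj hj2
      rcases le_or_gt (j + 2) (b + 1) with h | h
      · exact halt1 j hj (by omega)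
      · exact halt2 j (by omega) (by omega)
    rcases hF1.1 with hFAB1 | hLAB1 <;> rcases hF2.1 with hFAB2 | hLAB2
    · -- FAB, FAB : extend F2 one arc to the left
      have steps1 := fab_steps B hB g n a (b - a + 1) hrange hn1 hF1 hFAB1
      have steps2 := fab_steps B hB g n c (d - c + 1) hrange hn2 hF2 hFAB2
      have stepsU : ∀ j, c - 1 ≤ j → j + 2 ≤ (c - 1) + (d - (c - 1) + 1) →
          |g (j + 1)| ≤ |g j| := by
        intro j hj hj2
        rcases le_or_gt (j + 2) (b + 1) with h | h
        · exact steps1 j (by omega) (by omega)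
        · exact steps2 j (by omega) (by omega)
      have haltU' : ∀ j, c - 1 ≤ j → j + 2 ≤ (c - 1) + (d - (c - 1) + 1) →
          (0 < g j ∧ g (j + 1) < 0) ∨ (g j < 0 ∧ 0 < g (j + 1)) :=
        fun j hj hj2 => haltU j (by omega) (by omega)
      have hFABU := build_fab g (c - 1) (d - (c - 1) + 1) haltU' stepsU
      have hFunU : Funnel B (SubPath g (c - 1)) (d - (c - 1) + 1) := by
        refine funnel_of B g _ _ (Or.inl hFABU) ?_
        intro j m hm hj hjm
        have hm3 : m ≤ 3 := by rcases hm with rfl | rfl <;> omega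
        rcases le_or_gt (j + m) (b + 1) with h | h
        · exact hno1 j m hm (by omega) (by omega)
        · exact hno2 j m hm (by omega) (by omega)
      have := hmax2 (c - 1) d (by omega) le_rfl hdn hFunU
      omega
    · -- FAB, LAB : contradiction at step c
      have s1 := fab_steps B hB g n a (b - a + 1) hrange hn1 hF1 hFAB1 c
        (by omega) (by omega)
      have s2 := lab_steps B hB g n c (d - c + 1) hrange hn2 hF2 hLAB2 c
        le_rfl (by omega)
      linarith
    · -- LAB, FAB
      have s2 := fab_steps B hB g n c (d - c + 1) hrange hn2 hF2 hFAB2 c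
        le_rfl (by omega)
      rcases le_or_gt (c + 2) b with hc2 | hc2
      · have s1 := lab_steps B hB g n a (b - a + 1) hrange hn1 hF1 hLAB1 c
          (by omega) (by omega)
        linarith
      · have hbc : b = c + 1 := by omega
        have hgne : g c ≠ -g b := hor.resolve_left (by omega)
        have s1 := lab_last B hB g n a (b - a + 1) hrange hn1 hF1 hLAB1 c
          (by omega) (by omega)
        have heq : |g c| = |g (c + 1)| := le_antisymm s1 s2
        have halt := halt1 c (by omega) (by omega)
        apply hgne
        rw [hbc]
        rcases halt with ⟨hp, hng⟩ | ⟨hng, hp⟩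
        · rw [abs_of_pos hp, abs_of_neg hng] at heq; linarith
        · rw [abs_of_neg hng, abs_of_pos hp] at heq; linarith
    · -- LAB, LAB : extend F1 one arc to the right
      have stepsU : ∀ j, a ≤ j → j + 2 ≤ a + (b + 1 - a + 1) → |g j| ≤ |g (j + 1)| := by
        intro j hj hj2
        rcases le_or_gt (j + 3) (b + 1) with h | h
        · exact le_of_lt (lab_steps B hB g n a (b - a + 1) hrange hn1 hF1 hLAB1 j hj
            (by omega))
        · rcases le_or_gt (j + 2) (b + 1) with h' | h'
          · exact lab_last B hB g n a (b - a + 1) hrange hn1 hF1 hLAB1 j hj (by omega)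
          · rcases le_or_gt (j + 3) (d + 1) with h'' | h''
            · exact le_of_lt (lab_steps B hB g n c (d - c + 1) hrange hn2 hF2 hLAB2 j
                (by omega) (by omega))
            · exact lab_last B hB g n c (d - c + 1) hrange hn2 hF2 hLAB2 j
                (by omega) (by omega)
      have haltU' : ∀ j, a ≤ j → j + 2 ≤ a + (b + 1 - a + 1) →
          (0 < g j ∧ g (j + 1) < 0) ∨ (g j < 0 ∧ 0 < g (j + 1)) :=
        fun j hj hj2 => haltU j hj (by omega)
      have hLABU := build_lab g a (b + 1 - a + 1) (b - a + 1) (by omega) haltU' stepsU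
      have hFunU : Funnel B (SubPath g a) (b + 1 - a + 1) := by
        refine funnel_of B g _ _ (Or.inr hLABU) ?_
        intro j m hm hj hjm
        have hm3 : m ≤ 3 := by rcases hm with rfl | rfl <;> omega
        rcases le_or_gt (j + m) (b + 1) with h | h
        · exact hno1 j m hm (by omega) (by omega)
        · exact hno2 j m hm (by omega) (by omega)
      have := hmax1 a (b + 1) le_rfl (by omega) (by omega) hFunU
      omega
  constructor
  · by_contra hcon
    exact key (by omega) (Or.inl (by omega))
  · intro hcb
    by_contra hg
    exact key (by omega) (Or.inr hg)

end

end EV
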